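/- Let k be an algebraically closed field of characteristic p > 2, s ≥ 1, n = p^s, and λ, μ ∈ k. Then H(λ,μ) is a local ring, and its unique maximal (left) ideal is the kernel of the unique k-algebra homomorphism H(λ,μ) → k sending g ↦ 1, a ↦ 0, b ↦ 0. Consequently, up to isomorphism the only simple left H(λ,μ)-module is the one-dimensional module on which g acts as the identity and a and b act as zero. -/

import Mathlib

open FreeAlgebra in
/-- The defining relations of the Hopf algebra `H(λ,μ)` of Cibils–Lauve–Witherspoon, on the
free algebra on three generators `g = ι 0`, `a = ι 1`, `b = ι 2`:
`g^n = 1`, `ag = ga`, `bg = ga + gb`, `a^p = λ(1-g^p)`, `b^p = μ(1-g^p)`,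
`ba = ab + (1/2)a²`. -/
inductive HRel (k : Type*) [Field k] (n p : ℕ) (lam mu : k) :
    FreeAlgebra k (Fin 3) → FreeAlgebra k (Fin 3) → Prop
  | gn : HRel k n p lam mu (ι k (0 : Fin 3) ^ n) 1
  | ag : HRel k n p lam mu (ι k (1 : Fin 3) * ι k (0 : Fin 3)) (ι k (0 : Fin 3) * ι k (1 : Fin 3))
  | bg : HRel k n p lam mu (ι k (2 : Fin 3) * ι k (0 : Fin 3))
      (ι k (0 : Fin 3) * ι k (1 : Fin 3) + ι k (0 : Fin 3) * ι k (2 : Fin 3))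
  | ap : HRel k n p lam mu (ι k (1 : Fin 3) ^ p)
      (algebraMap k (FreeAlgebra k (Fin 3)) lam * (1 - ι k (0 : Fin 3) ^ p))
  | bp : HRel k n p lam mu (ι k (2 : Fin 3) ^ p)
      (algebraMap k (FreeAlgebra k (Fin 3)) mu * (1 - ι k (0 : Fin 3) ^ p))
  | ba : HRel k n p lam mu (ι k (2 : Fin 3) * ι k (1 : Fin 3))
      (ι k (1 : Fin 3) * ι k (2 : Fin 3)
        + algebraMap k (FreeAlgebra k (Fin 3)) (1 / 2) * ι k (1 : Fin 3) ^ 2)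

/-- The algebra `H(λ,μ)`: the quotient of the free algebra on `g, a, b` by the two-sided
ideal generated by the relations `HRel`. -/
abbrev HAlg (k : Type*) [Field k] (n p : ℕ) (lam mu : k) := RingQuot (HRel k n p lam mu)

/-- The image of the generator `g` in `H(λ,μ)`. -/
noncomputable def Hg (k : Type*) [Field k] (n p : ℕ) (lam mu : k) : HAlg k n p lam mu :=
  RingQuot.mkAlgHom k (HRel k n p lam mu) (FreeAlgebra.ι k (0 : Fin 3))

/-- The image of the generator `a` in `H(λ,μ)`. -/
noncomputable def Ha (k : Type*) [Field k] (n p : ℕ) (lam mu : k) : HAlg k n p lam mu :=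
  RingQuot.mkAlgHom k (HRel k n p lam mu) (FreeAlgebra.ι k (1 : Fin 3))

/-- The image of the generator `b` in `H(λ,μ)`. -/
noncomputable def Hb (k : Type*) [Field k] (n p : ℕ) (lam mu : k) : HAlg k n p lam mu :=
  RingQuot.mkAlgHom k (HRel k n p lam mu) (FreeAlgebra.ι k (2 : Fin 3))

namespace CLW

variable {k : Type*} [CommRing k] {R : Type*} [Ring R] [Algebra k R]

/-- Span of ordered monomials `x^i a^j b^l` of weight `i + 2j + l` at least `m`. -/
def W (k : Type*) [CommRing k] {R : Type*} [Ring R] [Algebra k R]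
    (x a b : R) (m : ℕ) : Submodule k R :=
  Submodule.span k {v | ∃ i j l : ℕ, m ≤ i + 2*j + l ∧ v = x ^ i * a ^ j * b ^ l}

variable (x a b : R) (c : k)

theorem mem_W {m i j l : ℕ} (h : m ≤ i + 2*j + l) :
    x ^ i * a ^ j * b ^ l ∈ W k x a b m :=
  Submodule.subset_span ⟨i, j, l, h, rfl⟩

theorem one_mem_W : (1 : R) ∈ W k x a b 0 := by
  simpa using mem_W x a b (k := k) (m := 0) (i := 0) (j := 0) (l := 0) (by omega)

theorem W_mono {m m' : ℕ} (h : m ≤ m') : W k x a b m' ≤ W k x a b m :=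
  Submodule.span_mono fun v ⟨i, j, l, hw, hv⟩ => ⟨i, j, l, le_trans h hw, hv⟩

theorem xmul {m : ℕ} {v : R} (hv : v ∈ W k x a b m) : x * v ∈ W k x a b (m+1) := by
  induction hv using Submodule.span_induction with
  | mem v hv =>
    obtain ⟨i, j, l, hw, rfl⟩ := hv
    have h1 : x * (x ^ i * a ^ j * b ^ l) = x ^ (i+1) * a ^ j * b ^ l := by
      rw [← mul_assoc, ← mul_assoc, ← pow_succ']
    rw [h1]
    exact mem_W x a b (by omega)
  | zero => rw [mul_zero]; exact Submodule.zero_mem _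
  | add u w hu hw ihu ihw => rw [mul_add]; exact Submodule.add_mem _ ihu ihw
  | smul r u hu ihu => rw [mul_smul_comm]; exact Submodule.smul_mem _ _ ihu

theorem amul (hax : Commute a x) {m : ℕ} {v : R} (hv : v ∈ W k x a b m) :
    a * v ∈ W k x a b (m+2) := by
  induction hv using Submodule.span_induction with
  | mem v hv =>
    obtain ⟨i, j, l, hw, rfl⟩ := hv
    have h1 : a * (x ^ i * a ^ j * b ^ l) = x ^ i * a ^ (j+1) * b ^ l := by
      rw [← mul_assoc, ← mul_assoc, (hax.pow_right i).eq, mul_assoc (x ^ i), ← pow_succ']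
    rw [h1]
    exact mem_W x a b (by omega)
  | zero => rw [mul_zero]; exact Submodule.zero_mem _
  | add u w hu hw ihu ihw => rw [mul_add]; exact Submodule.add_mem _ ihu ihw
  | smul r u hu ihu => rw [mul_smul_comm]; exact Submodule.smul_mem _ _ ihu

theorem b_mul_a_pow (hba : b * a = a * b + c • a ^ 2) (j : ℕ) :
    b * a ^ j = a ^ j * b + ((j : k) * c) • a ^ (j+1) := by
  induction j with
  | zero => simp
  | succ j ih =>
    conv_lhs => rw [pow_succ, ← mul_assoc, ih]
    rw [add_mul, smul_mul_assoc, mul_assoc, hba, mul_add, mul_smul_comm,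
      ← mul_assoc, ← pow_succ, ← pow_add, ← pow_succ, add_assoc, ← add_smul]
    congr 2
    push_cast
    ring

theorem bmulMono (hax : Commute a x) (hbx : b * x = x * b + x * a + a)
    (hba : b * a = a * b + c • a ^ 2) :
    ∀ i j l : ℕ, b * (x ^ i * a ^ j * b ^ l) ∈ W k x a b (i + 2*j + l + 1) := by
  intro i
  induction i with
  | zero =>
    intro j l
    have h1 : b * (x ^ 0 * a ^ j * b ^ l)
        = x ^ 0 * a ^ j * b ^ (l+1) + ((j : k) * c) • (x ^ 0 * a ^ (j+1) * b ^ l) := by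
      rw [pow_zero, one_mul, one_mul, ← mul_assoc, b_mul_a_pow a b c hba j, add_mul,
        smul_mul_assoc, mul_assoc, ← pow_succ']
    rw [h1]
    exact Submodule.add_mem _ (mem_W x a b (by omega))
      (Submodule.smul_mem _ _ (mem_W x a b (by omega)))
  | succ i ih =>
    intro j l
    have h1 : b * (x ^ (i+1) * a ^ j * b ^ l)
        = x * (b * (x ^ i * a ^ j * b ^ l)) + x * (a * (x ^ i * a ^ j * b ^ l))
          + a * (x ^ i * a ^ j * b ^ l) := by
      have h2 : x ^ (i+1) * a ^ j * b ^ l = x * (x ^ i * a ^ j * b ^ l) := by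
        simp only [pow_succ', mul_assoc]
      rw [h2, ← mul_assoc, hbx]
      simp only [add_mul, mul_assoc]
    rw [h1]
    refine Submodule.add_mem _ (Submodule.add_mem _ ?_ ?_) ?_
    · exact W_mono x a b (by omega) (xmul x a b (ih j l))
    · exact W_mono x a b (by omega) (xmul x a b (amul x a b hax (mem_W x a b le_rfl)))
    · exact W_mono x a b (by omega) (amul x a b hax (mem_W x a b le_rfl))

theorem bmul (hax : Commute a x) (hbx : b * x = x * b + x * a + a)
    (hba : b * a = a * b + c • a ^ 2) {m : ℕ} {v : R} (hv : v ∈ W k x a b m) :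
    b * v ∈ W k x a b (m+1) := by
  induction hv using Submodule.span_induction with
  | mem v hv =>
    obtain ⟨i, j, l, hw, rfl⟩ := hv
    exact W_mono x a b (by omega) (bmulMono x a b c hax hbx hba i j l)
  | zero => rw [mul_zero]; exact Submodule.zero_mem _
  | add u w hu hw ihu ihw => rw [mul_add]; exact Submodule.add_mem _ ihu ihw
  | smul r u hu ihu => rw [mul_smul_comm]; exact Submodule.smul_mem _ _ ihu

theorem mulW (hax : Commute a x) (hbx : b * x = x * b + x * a + a)
    (hba : b * a = a * b + c • a ^ 2) {m m' : ℕ} {u v : R}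
    (hu : u ∈ W k x a b m) (hv : v ∈ W k x a b m') : u * v ∈ W k x a b (m + m') := by
  induction hu using Submodule.span_induction with
  | mem u hu =>
    obtain ⟨i, j, l, hw, rfl⟩ := hu
    have hb : ∀ (t : ℕ) (w : R), w ∈ W k x a b m' → b ^ t * w ∈ W k x a b (m' + t) := by
      intro t
      induction t with
      | zero => intro w hw; simpa using hw
      | succ t iht =>
        intro w hw
        have : b ^ (t+1) * w = b * (b ^ t * w) := by rw [pow_succ', mul_assoc]
        rw [this]
        exact bmul x a b c hax hbx hba (iht w hw)
    have ha : ∀ (t : ℕ) (m'' : ℕ) (w : R), w ∈ W k x a b m'' →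
        a ^ t * w ∈ W k x a b (m'' + 2*t) := by
      intro t
      induction t with
      | zero => intro m'' w hw; simpa using hw
      | succ t iht =>
        intro m'' w hw
        have : a ^ (t+1) * w = a * (a ^ t * w) := by rw [pow_succ', mul_assoc]
        rw [this]
        exact W_mono x a b (by omega) (amul x a b hax (iht m'' w hw))
    have hx : ∀ (t : ℕ) (m'' : ℕ) (w : R), w ∈ W k x a b m'' →
        x ^ t * w ∈ W k x a b (m'' + t) := by
      intro t
      induction t with
      | zero => intro m'' w hw; simpa using hw
      | succ t iht =>
        intro m'' w hw
        have : x ^ (t+1) * w = x * (x ^ t * w) := by rw [pow_succ', mul_assoc]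
        rw [this]
        exact xmul x a b (iht m'' w hw)
    have h1 : x ^ i * a ^ j * b ^ l * v = x ^ i * (a ^ j * (b ^ l * v)) := by
      simp only [mul_assoc]
    rw [h1]
    exact W_mono x a b (by omega) (hx i _ _ (ha j _ _ (hb l v hv)))
  | zero => rw [zero_mul]; exact Submodule.zero_mem _
  | add u w hu hw ihu ihw => rw [add_mul]; exact Submodule.add_mem _ ihu ihw
  | smul r u hu ihu => rw [smul_mul_assoc]; exact Submodule.smul_mem _ _ ihu

theorem powW (hax : Commute a x) (hbx : b * x = x * b + x * a + a)
    (hba : b * a = a * b + c • a ^ 2) {v : R} (hv : v ∈ W k x a b 1) (t : ℕ) :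
    v ^ t ∈ W k x a b t := by
  induction t with
  | zero => rw [pow_zero]; exact one_mem_W x a b
  | succ t ih =>
    rw [pow_succ]
    exact mulW x a b c hax hbx hba ih hv

theorem Wbot {n : ℕ} (hx : x ^ n = 0) (ha : a ^ n = 0) (hb : b ^ n = 0)
    {v : R} (hv : v ∈ W k x a b (4*n)) : v = 0 := by
  have : W k x a b (4*n) ≤ (⊥ : Submodule k R) := by
    rw [W]
    refine Submodule.span_le.2 ?_
    rintro v ⟨i, j, l, hw, rfl⟩
    have hcase : n ≤ i ∨ n ≤ j ∨ n ≤ l := by omega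
    simp only [SetLike.mem_coe, Submodule.mem_bot]
    rcases hcase with h | h | h
    · rw [pow_eq_zero_of_le h hx, zero_mul, zero_mul]
    · rw [pow_eq_zero_of_le h ha, mul_zero, zero_mul]
    · rw [pow_eq_zero_of_le h hb, mul_zero]
  simpa using this hv


theorem algebraMap_mul_neg (lam : k) (y : R) :
    algebraMap k R lam * -y = (-lam) • y := by
  rw [mul_neg, ← Algebra.smul_def, ← neg_smul]

theorem smul_pow_eq (cc : k) (y : R) (m : ℕ) : (cc • y) ^ m = cc ^ m • y ^ m :=
  smul_pow cc y m

end CLW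

namespace CLWInst

variable (k : Type*) [Field k] (n p : ℕ) (lam mu : k)

local notation "H" => HAlg k n p lam mu
local notation "GG" => Hg k n p lam mu
local notation "AA" => Ha k n p lam mu
local notation "BB" => Hb k n p lam mu
local notation "XX" => Hg k n p lam mu - 1

theorem rel_g : GG ^ n = 1 := by
  have h := RingQuot.mkAlgHom_rel k (s := HRel k n p lam mu) HRel.gn
  simpa [Hg, map_pow] using h

theorem rel_ag : AA * GG = GG * AA := by
  have h := RingQuot.mkAlgHom_rel k (s := HRel k n p lam mu) HRel.ag
  simpa [Hg, Ha, map_mul] using h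

theorem rel_bg : BB * GG = GG * AA + GG * BB := by
  have h := RingQuot.mkAlgHom_rel k (s := HRel k n p lam mu) HRel.bg
  simpa [Hg, Ha, Hb, map_mul, map_add] using h

theorem rel_ap : AA ^ p = algebraMap k H lam * (1 - GG ^ p) := by
  have h := RingQuot.mkAlgHom_rel k (s := HRel k n p lam mu) HRel.ap
  simpa [Hg, Ha, map_pow, map_mul, map_sub, map_one, AlgHom.commutes] using h

theorem rel_bp : BB ^ p = algebraMap k H mu * (1 - GG ^ p) := by
  have h := RingQuot.mkAlgHom_rel k (s := HRel k n p lam mu) HRel.bp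
  simpa [Hg, Hb, map_pow, map_mul, map_sub, map_one, AlgHom.commutes] using h

theorem rel_ba : BB * AA = AA * BB + (1 / 2 : k) • AA ^ 2 := by
  have h := RingQuot.mkAlgHom_rel k (s := HRel k n p lam mu) HRel.ba
  simp only [map_mul, map_add, map_pow, AlgHom.commutes] at h
  rw [Algebra.smul_def]
  exact h

theorem hax : Commute AA XX :=
  Commute.sub_right (show Commute AA GG from rel_ag k n p lam mu) (Commute.one_right AA)

theorem hbx : BB * XX = XX * BB + XX * AA + AA := by
  rw [mul_sub, sub_mul, sub_mul, mul_one, one_mul, one_mul, rel_bg]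
  abel

/-- The algebra map to `k` on the free algebra: `g ↦ 1`, `a, b ↦ 0`. -/
noncomputable def F0 : FreeAlgebra k (Fin 3) →ₐ[k] k :=
  FreeAlgebra.lift k (fun i => if i = 0 then (1 : k) else 0)

theorem F0_rel (hp0 : p ≠ 0) : ∀ ⦃u v⦄, HRel k n p lam mu u v → F0 k u = F0 k v := by
  intro u v h
  cases h <;>
    simp [F0, zero_pow hp0, show (1 : Fin 3) ≠ 0 by decide, show (2 : Fin 3) ≠ 0 by decide]

/-- The canonical character `H(λ,μ) → k`. -/
noncomputable def f0 (hp0 : p ≠ 0) : HAlg k n p lam mu →ₐ[k] k :=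
  RingQuot.liftAlgHom k ⟨F0 k, F0_rel k n p lam mu hp0⟩

theorem f0_g (hp0 : p ≠ 0) : f0 k n p lam mu hp0 GG = 1 := by
  simp [f0, Hg, F0]

theorem f0_a (hp0 : p ≠ 0) : f0 k n p lam mu hp0 AA = 0 := by
  simp [f0, Ha, F0, show (1 : Fin 3) ≠ 0 by decide]

theorem f0_b (hp0 : p ≠ 0) : f0 k n p lam mu hp0 BB = 0 := by
  simp [f0, Hb, F0, show (2 : Fin 3) ≠ 0 by decide]

theorem nontrivial_H (hp0 : p ≠ 0) : Nontrivial H :=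
  (f0 k n p lam mu hp0).toRingHom.domain_nontrivial

end CLWInst

namespace CLWInst

variable (k : Type*) [Field k] (n p : ℕ) (lam mu : k)

local notation "H" => HAlg k n p lam mu
local notation "GG" => Hg k n p lam mu
local notation "AA" => Ha k n p lam mu
local notation "BB" => Hb k n p lam mu
local notation "XX" => Hg k n p lam mu - 1

theorem Xpow [CharP k p] [Fact p.Prime] (s : ℕ) (hn : n = p ^ s) : XX ^ n = 0 := by
  subst hn
  haveI := nontrivial_H k (p ^ s) p lam mu (Nat.Prime.ne_zero Fact.out)
  haveI : CharP (HAlg k (p ^ s) p lam mu) p := charP_of_injective_ringHom (algebraMap k (HAlg k (p ^ s) p lam mu)).injective p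
  have h := sub_pow_char_pow_of_commute p s (Commute.one_right (Hg k (p ^ s) p lam mu))
  rw [h, one_pow, rel_g k (p ^ s) p lam mu, sub_self]

theorem Apow [CharP k p] [Fact p.Prime] (s : ℕ) (hs : 1 ≤ s) (hn : n = p ^ s) :
    AA ^ n = 0 := by
  subst hn
  haveI := nontrivial_H k (p ^ s) p lam mu (Nat.Prime.ne_zero Fact.out)
  haveI : CharP (HAlg k (p ^ s) p lam mu) p := charP_of_injective_ringHom (algebraMap k (HAlg k (p ^ s) p lam mu)).injective p
  have h2 : (Hg k (p ^ s) p lam mu - 1) ^ p = Hg k (p ^ s) p lam mu ^ p - 1 := by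
    simpa using sub_pow_char_of_commute p (Commute.one_right (Hg k (p ^ s) p lam mu))
  have hneg : (1 - Hg k (p ^ s) p lam mu ^ p : HAlg k (p ^ s) p lam mu)
      = -((Hg k (p ^ s) p lam mu - 1) ^ p) := by
    rw [h2]; exact (neg_sub _ _).symm
  have hap : Ha k (p ^ s) p lam mu ^ p = (-lam) • (Hg k (p ^ s) p lam mu - 1) ^ p := by
    rw [rel_ap k (p ^ s) p lam mu, hneg]
    exact CLW.algebraMap_mul_neg lam _
  have hexp : p ^ s = p * p ^ (s - 1) := by rw [← pow_succ', Nat.sub_add_cancel hs]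
  have e1 : Ha k (p ^ s) p lam mu ^ (p ^ s)
      = (Ha k (p ^ s) p lam mu ^ p) ^ (p ^ (s - 1)) := by rw [← pow_mul, ← hexp]
  have e2 : ((Hg k (p ^ s) p lam mu - 1) ^ p) ^ (p ^ (s - 1))
      = (Hg k (p ^ s) p lam mu - 1) ^ (p ^ s) := by rw [← pow_mul, ← hexp]
  rw [e1, hap]
  have e3 : ((-lam) • (Hg k (p ^ s) p lam mu - 1) ^ p) ^ p ^ (s - 1)
      = (-lam) ^ p ^ (s - 1) • ((Hg k (p ^ s) p lam mu - 1) ^ p) ^ p ^ (s - 1) :=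
    CLW.smul_pow_eq (R := HAlg k (p ^ s) p lam mu) _ _ _
  have e4 : ((Hg k (p ^ s) p lam mu - 1) ^ p) ^ p ^ (s - 1)
      = (0 : HAlg k (p ^ s) p lam mu) := by
    rw [e2]; exact Xpow k (p ^ s) p lam mu s rfl
  rw [e3, e4]
  exact smul_zero _

theorem Bpow [CharP k p] [Fact p.Prime] (s : ℕ) (hs : 1 ≤ s) (hn : n = p ^ s) :
    BB ^ n = 0 := by
  subst hn
  haveI := nontrivial_H k (p ^ s) p lam mu (Nat.Prime.ne_zero Fact.out)
  haveI : CharP (HAlg k (p ^ s) p lam mu) p := charP_of_injective_ringHom (algebraMap k (HAlg k (p ^ s) p lam mu)).injective p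
  have h2 : (Hg k (p ^ s) p lam mu - 1) ^ p = Hg k (p ^ s) p lam mu ^ p - 1 := by
    simpa using sub_pow_char_of_commute p (Commute.one_right (Hg k (p ^ s) p lam mu))
  have hneg : (1 - Hg k (p ^ s) p lam mu ^ p : HAlg k (p ^ s) p lam mu)
      = -((Hg k (p ^ s) p lam mu - 1) ^ p) := by
    rw [h2]; exact (neg_sub _ _).symm
  have hap : Hb k (p ^ s) p lam mu ^ p = (-mu) • (Hg k (p ^ s) p lam mu - 1) ^ p := by
    rw [rel_bp k (p ^ s) p lam mu, hneg]
    exact CLW.algebraMap_mul_neg mu _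
  have hexp : p ^ s = p * p ^ (s - 1) := by rw [← pow_succ', Nat.sub_add_cancel hs]
  have e1 : Hb k (p ^ s) p lam mu ^ (p ^ s)
      = (Hb k (p ^ s) p lam mu ^ p) ^ (p ^ (s - 1)) := by rw [← pow_mul, ← hexp]
  have e2 : ((Hg k (p ^ s) p lam mu - 1) ^ p) ^ (p ^ (s - 1))
      = (Hg k (p ^ s) p lam mu - 1) ^ (p ^ s) := by rw [← pow_mul, ← hexp]
  rw [e1, hap]
  have e3 : ((-mu) • (Hg k (p ^ s) p lam mu - 1) ^ p) ^ p ^ (s - 1)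
      = (-mu) ^ p ^ (s - 1) • ((Hg k (p ^ s) p lam mu - 1) ^ p) ^ p ^ (s - 1) :=
    CLW.smul_pow_eq (R := HAlg k (p ^ s) p lam mu) _ _ _
  have e4 : ((Hg k (p ^ s) p lam mu - 1) ^ p) ^ p ^ (s - 1)
      = (0 : HAlg k (p ^ s) p lam mu) := by
    rw [e2]; exact Xpow k (p ^ s) p lam mu s rfl
  rw [e3, e4]
  exact smul_zero _

theorem Wtop (h : H) : h ∈ CLW.W k XX AA BB 0 := by
  obtain ⟨w, rfl⟩ := RingQuot.mkAlgHom_surjective k (HRel k n p lam mu) h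
  induction w using FreeAlgebra.induction with
  | grade0 r =>
    rw [AlgHom.commutes, Algebra.algebraMap_eq_smul_one]
    exact Submodule.smul_mem _ _ (CLW.one_mem_W XX AA BB)
  | grade1 i =>
    fin_cases i
    · have h0 : (RingQuot.mkAlgHom k (HRel k n p lam mu)) (FreeAlgebra.ι k (0 : Fin 3))
          = XX + 1 := by rw [sub_add_cancel]; rfl
      refine h0 ▸ Submodule.add_mem _ ?_ (CLW.one_mem_W XX AA BB)
      simpa using CLW.mem_W XX AA BB (k := k) (m := 0) (i := 1) (j := 0) (l := 0) (by omega)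
    · show AA ∈ _
      simpa using CLW.mem_W XX AA BB (k := k) (m := 0) (i := 0) (j := 1) (l := 0) (by omega)
    · show BB ∈ _
      simpa using CLW.mem_W XX AA BB (k := k) (m := 0) (i := 0) (j := 0) (l := 1) (by omega)
  | mul u v hu hv =>
    rw [map_mul]
    simpa using CLW.mulW XX AA BB (1/2 : k) (hax k n p lam mu) (hbx k n p lam mu)
      (rel_ba k n p lam mu) hu hv
  | add u v hu hv =>
    rw [map_add]
    exact Submodule.add_mem _ hu hv

theorem vanish (f : HAlg k n p lam mu →ₐ[k] k) (hg : f GG = 1) (ha : f AA = 0)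
    (hb : f BB = 0) {v : H} (hv : v ∈ CLW.W k XX AA BB 1) : f v = 0 := by
  have hx : f XX = 0 := by rw [map_sub, map_one, hg, sub_self]
  induction hv using Submodule.span_induction with
  | mem v hv =>
    obtain ⟨i, j, l, hw, rfl⟩ := hv
    rw [map_mul, map_mul, map_pow, map_pow, map_pow, hx, ha, hb]
    rcases (show i ≠ 0 ∨ j ≠ 0 ∨ l ≠ 0 by omega) with h | h | h
    · rw [zero_pow h, zero_mul, zero_mul]
    · rw [zero_pow h, mul_zero, zero_mul]
    · rw [zero_pow h, mul_zero]
  | zero => exact map_zero f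
  | add u w hu hw ihu ihw => rw [map_add, ihu, ihw, add_zero]
  | smul r u hu ihu => rw [map_smul, ihu, smul_zero]

theorem decomp (h : H) :
    ∃ (cc : k) (w : H), w ∈ CLW.W k XX AA BB 1 ∧ h = algebraMap k H cc + w := by
  have h0 := Wtop k n p lam mu h
  have hle : CLW.W k XX AA BB 0 ≤ Submodule.span k {(1 : H)} ⊔ CLW.W k XX AA BB 1 := by
    rw [CLW.W]
    refine Submodule.span_le.2 ?_
    rintro v ⟨i, j, l, hw, rfl⟩
    rcases Nat.eq_zero_or_pos (i + 2*j + l) with h1 | h1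
    · obtain ⟨rfl, rfl, rfl⟩ : i = 0 ∧ j = 0 ∧ l = 0 := by omega
      apply Submodule.mem_sup_left
      simpa using Submodule.mem_span_singleton_self (1 : H)
    · exact Submodule.mem_sup_right (CLW.mem_W XX AA BB h1)
  obtain ⟨u, hu, w, hw, huw⟩ := Submodule.mem_sup.1 (hle h0)
  obtain ⟨cc, rfl⟩ := Submodule.mem_span_singleton.1 hu
  exact ⟨cc, w, hw, by rw [← huw, Algebra.algebraMap_eq_smul_one]⟩

theorem nilp [CharP k p] [Fact p.Prime] (s : ℕ) (hs : 1 ≤ s) (hn : n = p ^ s)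
    {w : H} (hw : w ∈ CLW.W k XX AA BB 1) : IsNilpotent w :=
  ⟨4*n, CLW.Wbot XX AA BB (Xpow k n p lam mu s hn) (Apow k n p lam mu s hs hn)
    (Bpow k n p lam mu s hs hn)
    (CLW.powW XX AA BB (1/2 : k) (hax k n p lam mu) (hbx k n p lam mu)
      (rel_ba k n p lam mu) hw (4*n))⟩

theorem unit_of_ne [CharP k p] [Fact p.Prime] (s : ℕ) (hs : 1 ≤ s) (hn : n = p ^ s)
    (f : HAlg k n p lam mu →ₐ[k] k) (hg : f GG = 1) (ha : f AA = 0) (hb : f BB = 0)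
    (h : H) (hne : f h ≠ 0) : IsUnit h := by
  obtain ⟨cc, w, hw, rfl⟩ := decomp k n p lam mu h
  have hcc : f (algebraMap k H cc + w) = cc := by
    rw [map_add, AlgHom.commutes, Algebra.algebraMap_self_apply, vanish k n p lam mu f hg ha hb hw, add_zero]
  have hcu : IsUnit (algebraMap k H cc) :=
    (algebraMap k H).isUnit_map (isUnit_iff_ne_zero.2 (hcc ▸ hne))
  exact (nilp k n p lam mu s hs hn hw).isUnit_add_left_of_commute hcu
    ((Algebra.commutes cc w).symm)

theorem hom_unique (f f' : HAlg k n p lam mu →ₐ[k] k)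
    (hg : f GG = 1) (ha : f AA = 0) (hb : f BB = 0)
    (hg' : f' GG = 1) (ha' : f' AA = 0) (hb' : f' BB = 0) : f = f' := by
  apply AlgHom.ext
  intro h
  obtain ⟨w, rfl⟩ := RingQuot.mkAlgHom_surjective k (HRel k n p lam mu) h
  induction w using FreeAlgebra.induction with
  | grade0 r => simp
  | grade1 i =>
    fin_cases i
    · exact hg.trans hg'.symm
    · exact ha.trans ha'.symm
    · exact hb.trans hb'.symm
  | mul u v hu hv => simp only [map_mul, hu, hv]
  | add u v hu hv => simp only [map_add, hu, hv]

end CLWInst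

/-- For `k` algebraically closed of characteristic `p > 2` and `n = p^s`
(`s ≥ 1`), `H(λ,μ)` is a local ring; there is a unique `k`-algebra homomorphism
`f : H(λ,μ) → k` with `f(g) = 1`, `f(a) = 0`, `f(b) = 0`; its kernel is the unique
maximal (left) ideal; and every simple left `H(λ,μ)`-module is isomorphic to the
corresponding one-dimensional module `H(λ,μ) ⧸ ker f` (on which `g` acts as the identity
and `a`, `b` act as zero). -/
theorem stmt9 {k : Type*} [Field k] [IsAlgClosed k] (p : ℕ) [CharP k p] (hp : 2 < p)
    (s : ℕ) (hs : 1 ≤ s) (lam mu : k) :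
    IsLocalRing (HAlg k (p ^ s) p lam mu) ∧
    (∃! f : HAlg k (p ^ s) p lam mu →ₐ[k] k,
      f (Hg k (p ^ s) p lam mu) = 1 ∧ f (Ha k (p ^ s) p lam mu) = 0 ∧
        f (Hb k (p ^ s) p lam mu) = 0) ∧
    (∀ f : HAlg k (p ^ s) p lam mu →ₐ[k] k,
      f (Hg k (p ^ s) p lam mu) = 1 → f (Ha k (p ^ s) p lam mu) = 0 →
      f (Hb k (p ^ s) p lam mu) = 0 →
        (∀ I : Ideal (HAlg k (p ^ s) p lam mu), I.IsMaximal →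
          I = RingHom.ker (f : HAlg k (p ^ s) p lam mu →+* k)) ∧
        (∀ (M : Type) [AddCommGroup M] [Module (HAlg k (p ^ s) p lam mu) M],
          IsSimpleModule (HAlg k (p ^ s) p lam mu) M →
          Nonempty (M ≃ₗ[HAlg k (p ^ s) p lam mu]
            (HAlg k (p ^ s) p lam mu ⧸
              RingHom.ker (f : HAlg k (p ^ s) p lam mu →+* k))))) := by
  have hp0 : p ≠ 0 := by omega
  have hprime : p.Prime := (CharP.char_is_prime_or_zero k p).resolve_right hp0
  haveI : Fact p.Prime := ⟨hprime⟩
  haveI hnt : Nontrivial (HAlg k (p ^ s) p lam mu) :=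
    CLWInst.nontrivial_H k (p ^ s) p lam mu hp0
  have hg0 := CLWInst.f0_g k (p ^ s) p lam mu hp0
  have ha0 := CLWInst.f0_a k (p ^ s) p lam mu hp0
  have hb0 := CLWInst.f0_b k (p ^ s) p lam mu hp0
  have hLoc : IsLocalRing (HAlg k (p ^ s) p lam mu) := by
    refine { toNontrivial := hnt, isUnit_or_isUnit_of_add_one := ?_ }
    intro a b hab
    by_cases h : CLWInst.f0 k (p ^ s) p lam mu hp0 a = 0
    · right
      apply CLWInst.unit_of_ne k (p ^ s) p lam mu s hs rfl
        (CLWInst.f0 k (p ^ s) p lam mu hp0) hg0 ha0 hb0 b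
      have h1 : CLWInst.f0 k (p ^ s) p lam mu hp0 a
          + CLWInst.f0 k (p ^ s) p lam mu hp0 b = 1 := by
        rw [← map_add, hab, map_one]
      rw [h, zero_add] at h1
      rw [h1]
      exact one_ne_zero
    · exact Or.inl (CLWInst.unit_of_ne k (p ^ s) p lam mu s hs rfl
        (CLWInst.f0 k (p ^ s) p lam mu hp0) hg0 ha0 hb0 a h)
  refine ⟨hLoc, ⟨CLWInst.f0 k (p ^ s) p lam mu hp0, ⟨hg0, ha0, hb0⟩, ?_⟩, ?_⟩
  · rintro f' ⟨hg', ha', hb'⟩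
    exact CLWInst.hom_unique k (p ^ s) p lam mu f'
      (CLWInst.f0 k (p ^ s) p lam mu hp0) hg' ha' hb' hg0 ha0 hb0
  · intro f hg ha hb
    have hmax : ∀ I : Ideal (HAlg k (p ^ s) p lam mu), I.IsMaximal →
        I = RingHom.ker (f : HAlg k (p ^ s) p lam mu →+* k) := by
      intro I hI
      have hle : I ≤ RingHom.ker (f : HAlg k (p ^ s) p lam mu →+* k) := by
        intro y hy
        by_contra hy0
        have hyne : f y ≠ 0 := by simpa [RingHom.mem_ker] using hy0
        exact hI.ne_top (I.eq_top_of_isUnit_mem hy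
          (CLWInst.unit_of_ne k (p ^ s) p lam mu s hs rfl f hg ha hb y hyne))
      have hne : RingHom.ker (f : HAlg k (p ^ s) p lam mu →+* k) ≠ ⊤ := by
        intro htop
        have h1 : (1 : HAlg k (p ^ s) p lam mu)
            ∈ RingHom.ker (f : HAlg k (p ^ s) p lam mu →+* k) := by rw [htop]; trivial
        rw [RingHom.mem_ker] at h1
        simp at h1
      rcases hle.lt_or_eq with hlt | heq
      · exact absurd (hI.out.2 _ hlt) hne
      · exact heq
    refine ⟨hmax, ?_⟩
    intro M _ _ hM
    haveI := hM
    haveI : Nontrivial M := IsSimpleModule.nontrivial (HAlg k (p ^ s) p lam mu) M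
    obtain ⟨m0, hm0⟩ := exists_ne (0 : M)
    have hφ : Function.Surjective
        (LinearMap.toSpanSingleton (HAlg k (p ^ s) p lam mu) M m0) := by
      rw [← LinearMap.range_eq_top, ← LinearMap.span_singleton_eq_range]
      rcases eq_bot_or_eq_top
        (Submodule.span (HAlg k (p ^ s) p lam mu) {m0}) with h | h
      · exact absurd (Submodule.span_singleton_eq_bot.1 h) hm0
      · exact h
    have e := (LinearMap.toSpanSingleton (HAlg k (p ^ s) p lam mu) M
      m0).quotKerEquivOfSurjective hφ
    haveI : IsSimpleModule (HAlg k (p ^ s) p lam mu)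
        (HAlg k (p ^ s) p lam mu ⧸
          LinearMap.ker (LinearMap.toSpanSingleton (HAlg k (p ^ s) p lam mu) M m0)) :=
      IsSimpleModule.congr e
    have hco : IsCoatom
        (LinearMap.ker (LinearMap.toSpanSingleton (HAlg k (p ^ s) p lam mu) M m0)) :=
      isSimpleModule_iff_isCoatom.1 this
    have hkmax : Ideal.IsMaximal
        (LinearMap.ker (LinearMap.toSpanSingleton (HAlg k (p ^ s) p lam mu) M m0)) := ⟨hco⟩
    have hk := hmax _ hkmax
    exact ⟨hk ▸ e.symm⟩
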